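/- Let φ : (ℝⁿ)ᵏ → L(ℝⁿ, ℝⁿ) be the frame operator map F ↦ S_F, and let F = (f_i)_{i=1}^k be a Parseval frame for ℝⁿ. Then the Fréchet derivative of φ at F is surjective onto the subspace of self-adjoint operators on ℝⁿ; explicitly, for every self-adjoint operator T on ℝⁿ there is a direction H = (h_i)_{i=1}^k ∈ (ℝⁿ)ᵏ (for instance h_i = (1/2) T f_i) with Dφ(F)(H) = T. -/

import Mathlib

open scoped RealInnerProductSpace

section Aux

variable {ι : Type*} [Fintype ι] {E : Type*} [NormedAddCommGroup E]
  [InnerProductSpace ℝ E]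

private noncomputable def frameB : E →L[ℝ] E →L[ℝ] (E →L[ℝ] E) :=
  (ContinuousLinearMap.smulRightL ℝ E E).comp (innerSL ℝ)

private theorem frameB_isBdd :
    IsBoundedBilinearMap ℝ (fun p : E × E => frameB p.1 p.2) :=
  (frameB (E := E)).isBoundedBilinearMap

private theorem frame_hasFDerivAt (f : ι → E) :
    HasFDerivAt (fun F : ι → E => ∑ i, (innerSL ℝ (F i)).smulRight (F i))
      (∑ i, ((frameB_isBdd (E := E)).deriv (f i, f i)).comp
        ((ContinuousLinearMap.proj i).prod (ContinuousLinearMap.proj i))) f := by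
  refine HasFDerivAt.fun_sum (fun i _ => ?_)
  have h1 := (frameB_isBdd (E := E)).hasFDerivAt (f i, f i)
  have h2 := (hasFDerivAt_apply (𝕜 := ℝ) i f : HasFDerivAt _ _ _).prodMk (hasFDerivAt_apply (𝕜 := ℝ) i f)
  exact h1.comp f h2

end Aux

/-- at a Parseval frame `F = (f i)` for `ℝⁿ`, the Fréchet derivative of
the frame operator map `φ` is surjective onto the self-adjoint operators: for every
self-adjoint `T` there is a direction `H` (namely `h i = ½ • T (f i)`) with
`Dφ(F)(H) = T`. -/
theorem frameOperator_fderiv_surj_selfAdjoint {n k : ℕ}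
    (f : Fin k → EuclideanSpace ℝ (Fin n))
    (hf : ∀ x : EuclideanSpace ℝ (Fin n), ∑ i, ⟪x, f i⟫ • f i = x) :
    ∀ T : EuclideanSpace ℝ (Fin n) →L[ℝ] EuclideanSpace ℝ (Fin n),
      (∀ x y : EuclideanSpace ℝ (Fin n), ⟪T x, y⟫ = ⟪x, T y⟫) →
      ∃ H : Fin k → EuclideanSpace ℝ (Fin n),
        H = (fun i => (2 : ℝ)⁻¹ • T (f i)) ∧
        fderiv ℝ
          (fun F : Fin k → EuclideanSpace ℝ (Fin n) =>
            ∑ i, (innerSL ℝ (F i)).smulRight (F i)) f H = T := by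
  intro T hT
  refine ⟨fun i => (2 : ℝ)⁻¹ • T (f i), rfl, ?_⟩
  rw [(frame_hasFDerivAt f).fderiv]
  refine ContinuousLinearMap.ext fun x => ?_
  calc (∑ i, ((frameB_isBdd).deriv (f i, f i)).comp
        ((ContinuousLinearMap.proj i).prod (ContinuousLinearMap.proj i)))
        (fun i => (2 : ℝ)⁻¹ • T (f i)) x
      = ∑ i, (⟪(2 : ℝ)⁻¹ • T (f i), x⟫ • f i + ⟪f i, x⟫ • ((2 : ℝ)⁻¹ • T (f i))) := by
        simp only [ContinuousLinearMap.sum_apply]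
        refine Finset.sum_congr rfl (fun i _ => ?_)
        simp only [ContinuousLinearMap.comp_apply, ContinuousLinearMap.prod_apply,
          ContinuousLinearMap.proj_apply, IsBoundedBilinearMap.deriv_apply,
          ContinuousLinearMap.add_apply, frameB, ContinuousLinearMap.smulRightL,
          ContinuousLinearMap.smulRight_apply, innerSL_apply_apply,
          LinearMap.mkContinuous₂_apply, ContinuousLinearMap.smulRightₗ,
          LinearMap.coe_mk, AddHom.coe_mk]
        exact add_comm _ _
    _ = (2 : ℝ)⁻¹ • (∑ i, ⟪T x, f i⟫ • f i) + (2 : ℝ)⁻¹ • T (∑ i, ⟪x, f i⟫ • f i) := by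
        rw [Finset.sum_add_distrib, map_sum, Finset.smul_sum, Finset.smul_sum]
        congr 1
        · refine Finset.sum_congr rfl (fun i _ => ?_)
          rw [real_inner_smul_left, smul_smul, hT, real_inner_comm (f i) (T x)]
        · refine Finset.sum_congr rfl (fun i _ => ?_)
          rw [map_smul, smul_comm, real_inner_comm]
    _ = T x := by
        rw [hf (T x), hf x]
        module
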